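/- If T and S are power bounded operators, neither of class C_{0·}, and T is similar to S, then γ(A_{T,L}) > 0 holds for some Banach limit L if and only if γ(A_{S,L}) > 0. -/

import Mathlib

open ContinuousLinearMap Filter Topology BoundedContinuousFunction

/-- The shift `n ↦ n + 1` as a continuous map on `ℕ`. -/
def natShift : C(ℕ, ℕ) := ⟨fun n => n + 1, continuous_of_discreteTopology⟩

/-- A Banach limit: a norm-one positive shift-invariant continuous linear functional on
the space of bounded (complex) sequences which extends the ordinary limit functional. -/
structure IsBanachLimit (L : (ℕ →ᵇ ℂ) →L[ℂ] ℂ) : Prop where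
  norm_one : ‖L‖ = 1
  lim_eq : ∀ (f : ℕ →ᵇ ℂ) (c : ℂ), Tendsto f atTop (𝓝 c) → L f = c
  pos : ∀ f : ℕ →ᵇ ℂ, (∀ n, 0 ≤ (f n).re ∧ (f n).im = 0) → 0 ≤ (L f).re ∧ (L f).im = 0
  shift_inv : ∀ f : ℕ →ᵇ ℂ, L (f.compContinuous natShift) = L f

/-- `A` is the `L`-asymptotic limit of `T`: a positive operator whose sesquilinear form is
the `L`-limit of the forms of the self-adjoint iterates `T*^n T^n`. -/
def IsLAsymptoticLimit {H : Type*} [NormedAddCommGroup H] [InnerProductSpace ℂ H]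
    [CompleteSpace H] (L : (ℕ →ᵇ ℂ) →L[ℂ] ℂ) (T A : H →L[ℂ] H) : Prop :=
  A.IsPositive ∧ ∀ (x y : H) (f : ℕ →ᵇ ℂ),
    (∀ n : ℕ, f n = (inner ℂ ((adjoint (T ^ n) ∘L T ^ n) x) y : ℂ)) →
      (inner ℂ (A x) y : ℂ) = L f

namespace Stmt14Aux

noncomputable section

variable {H : Type*} [NormedAddCommGroup H] [InnerProductSpace ℂ H] [CompleteSpace H]

local notation "⟪" x ", " y "⟫" => (inner ℂ x y : ℂ)

/-- The bounded sequence `n ↦ ⟪Sⁿ x, Sⁿ y⟫`. -/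
def seqBCF (S : H →L[ℂ] H) {C : ℝ} (hC : ∀ n : ℕ, ‖S ^ n‖ ≤ C) (x y : H) : ℕ →ᵇ ℂ :=
  BoundedContinuousFunction.ofNormedAddCommGroup
    (fun n => ⟪(S ^ n) x, (S ^ n) y⟫) continuous_of_discreteTopology
    (C * ‖x‖ * (C * ‖y‖)) (fun n => by
      have h1 : ‖(S ^ n) x‖ ≤ C * ‖x‖ :=
        le_trans ((S ^ n).le_opNorm x) (mul_le_mul_of_nonneg_right (hC n) (norm_nonneg x))
      have h2 : ‖(S ^ n) y‖ ≤ C * ‖y‖ :=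
        le_trans ((S ^ n).le_opNorm y) (mul_le_mul_of_nonneg_right (hC n) (norm_nonneg y))
      calc ‖⟪(S ^ n) x, (S ^ n) y⟫‖ ≤ ‖(S ^ n) x‖ * ‖(S ^ n) y‖ := norm_inner_le_norm _ _
        _ ≤ C * ‖x‖ * (C * ‖y‖) :=
          mul_le_mul h1 h2 (norm_nonneg _) (le_trans (norm_nonneg _) h1))

@[simp] lemma seqBCF_apply (S : H →L[ℂ] H) {C : ℝ} (hC : ∀ n : ℕ, ‖S ^ n‖ ≤ C) (x y : H)
    (n : ℕ) : seqBCF S hC x y n = ⟪(S ^ n) x, (S ^ n) y⟫ := rfl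

lemma norm_seqBCF_le (S : H →L[ℂ] H) {C : ℝ} (hC : ∀ n : ℕ, ‖S ^ n‖ ≤ C) (x y : H) :
    ‖seqBCF S hC x y‖ ≤ C * ‖x‖ * (C * ‖y‖) := by
  have hC0 : 0 ≤ C := le_trans (norm_nonneg _) (hC 0)
  exact BoundedContinuousFunction.norm_ofNormedAddCommGroup_le _
    (by positivity) _

lemma inner_self_re' (w : H) : (⟪w, w⟫).re = ‖w‖ ^ 2 := by
  rw [← RCLike.re_to_complex, inner_self_eq_norm_sq]

lemma inner_self_im' (w : H) : (⟪w, w⟫).im = 0 := by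
  rw [← RCLike.im_to_complex]; exact inner_self_im w

lemma inner_self_norm' (w : H) : ‖⟪w, w⟫‖ = ‖w‖ ^ 2 := by
  have h : ⟪w, w⟫ = ((‖w‖ ^ 2 : ℝ) : ℂ) := by
    apply Complex.ext
    · rw [inner_self_re', Complex.ofReal_re]
    · rw [inner_self_im', Complex.ofReal_im]
  rw [h, Complex.norm_real, Real.norm_eq_abs, abs_of_nonneg (by positivity)]

/-- Monotonicity of a Banach limit on real sequences. -/
lemma re_L_mono {L : (ℕ →ᵇ ℂ) →L[ℂ] ℂ} (hL : IsBanachLimit L) {f g : ℕ →ᵇ ℂ}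
    (hfg : ∀ n, (f n).im = 0 ∧ (g n).im = 0 ∧ (f n).re ≤ (g n).re) :
    (L f).re ≤ (L g).re := by
  have h := hL.pos (g - f) (fun n => by
    obtain ⟨h1, h2, h3⟩ := hfg n
    constructor
    · simpa using sub_nonneg.2 h3
    · simp [h1, h2])
  have h2 : L (g - f) = L g - L f := map_sub L g f
  rw [h2] at h
  have := h.1
  simp only [Complex.sub_re] at this
  linarith

/-- Any `L`-asymptotic limit satisfies the expected formula. -/
lemma inner_eq {L : (ℕ →ᵇ ℂ) →L[ℂ] ℂ} {S A : H →L[ℂ] H}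
    (hA : IsLAsymptoticLimit L S A) {C : ℝ} (hC : ∀ n : ℕ, ‖S ^ n‖ ≤ C) (x y : H) :
    ⟪A x, y⟫ = L (seqBCF S hC x y) := by
  refine hA.2 x y _ (fun n => ?_)
  simp only [seqBCF_apply, ContinuousLinearMap.comp_apply]
  rw [ContinuousLinearMap.adjoint_inner_left]

/-- Existence of the `L`-asymptotic limit of a power-bounded operator. -/
lemma exists_asymptotic_limit (L : (ℕ →ᵇ ℂ) →L[ℂ] ℂ) (hL : IsBanachLimit L)
    (S : H →L[ℂ] H) {C : ℝ} (hC : ∀ n : ℕ, ‖S ^ n‖ ≤ C) :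
    ∃ B : H →L[ℂ] H, IsLAsymptoticLimit L S B := by
  have hC0 : 0 ≤ C := le_trans (norm_nonneg _) (hC 0)
  -- the functional `y ↦ L ⟪Sⁿx, Sⁿy⟫` for fixed `x`
  have seq_addy : ∀ x y₁ y₂, seqBCF S hC x (y₁ + y₂) = seqBCF S hC x y₁ + seqBCF S hC x y₂ :=
    fun x y₁ y₂ => BoundedContinuousFunction.ext fun n => by
      simp [seqBCF_apply, map_add, inner_add_right]
  have seq_smuly : ∀ (c : ℂ) x y, seqBCF S hC x (c • y) = c • seqBCF S hC x y :=
    fun c x y => BoundedContinuousFunction.ext fun n => by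
      simp [seqBCF_apply, map_smul, inner_smul_right]
  have seq_addx : ∀ x₁ x₂ y, seqBCF S hC (x₁ + x₂) y = seqBCF S hC x₁ y + seqBCF S hC x₂ y :=
    fun x₁ x₂ y => BoundedContinuousFunction.ext fun n => by
      simp [seqBCF_apply, map_add, inner_add_left]
  have seq_smulx : ∀ (c : ℂ) x y,
      seqBCF S hC (c • x) y = (starRingEnd ℂ c) • seqBCF S hC x y :=
    fun c x y => BoundedContinuousFunction.ext fun n => by
      simp [seqBCF_apply, map_smul, inner_smul_left, mul_comm]
  let φ : H → (H →L[ℂ] ℂ) := fun x =>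
    LinearMap.mkContinuous
      { toFun := fun y => L (seqBCF S hC x y)
        map_add' := fun y₁ y₂ => by
          show L (seqBCF S hC x (y₁ + y₂)) = L (seqBCF S hC x y₁) + L (seqBCF S hC x y₂)
          rw [seq_addy, map_add]
        map_smul' := fun c y => by
          show L (seqBCF S hC x (c • y)) = c • L (seqBCF S hC x y)
          rw [seq_smuly, map_smul] }
      (‖L‖ * (C * ‖x‖ * C))
      (fun y => by
        calc ‖L (seqBCF S hC x y)‖ ≤ ‖L‖ * ‖seqBCF S hC x y‖ := L.le_opNorm _
          _ ≤ ‖L‖ * (C * ‖x‖ * (C * ‖y‖)) := by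
              have := norm_seqBCF_le S hC x y
              exact mul_le_mul_of_nonneg_left this (norm_nonneg L)
          _ = ‖L‖ * (C * ‖x‖ * C) * ‖y‖ := by ring)
  have hφ : ∀ x y, φ x y = L (seqBCF S hC x y) := fun x y => rfl
  let Bf : H → H := fun x => (InnerProductSpace.toDual ℂ H).symm (φ x)
  have hBf : ∀ x y, ⟪Bf x, y⟫ = L (seqBCF S hC x y) := fun x y =>
    InnerProductSpace.toDual_symm_apply
  have hBf_add : ∀ x₁ x₂, Bf (x₁ + x₂) = Bf x₁ + Bf x₂ := by
    intro x₁ x₂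
    apply ext_inner_right ℂ
    intro v
    rw [hBf, seq_addx, map_add, inner_add_left, hBf, hBf]
  have hBf_smul : ∀ (c : ℂ) x, Bf (c • x) = c • Bf x := by
    intro c x
    apply ext_inner_right ℂ
    intro v
    rw [hBf, seq_smulx, map_smul, inner_smul_left, hBf]
    rfl
  have hBf_bound : ∀ x, ‖Bf x‖ ≤ ‖L‖ * C * C * ‖x‖ := by
    intro x
    rcases eq_or_lt_of_le (norm_nonneg (Bf x)) with h0 | h0
    · rw [← h0]; positivity
    · have h1 : (‖Bf x‖ : ℝ) ^ 2 = (⟪Bf x, Bf x⟫).re := (inner_self_re' (Bf x)).symm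
      have h2 : (⟪Bf x, Bf x⟫).re ≤ ‖⟪Bf x, Bf x⟫‖ := Complex.re_le_norm _
      have h3 : ‖⟪Bf x, Bf x⟫‖ = ‖L (seqBCF S hC x (Bf x))‖ := by rw [hBf]
      have h4 : ‖L (seqBCF S hC x (Bf x))‖ ≤ ‖L‖ * (C * ‖x‖ * (C * ‖Bf x‖)) :=
        le_trans (L.le_opNorm _)
          (mul_le_mul_of_nonneg_left (norm_seqBCF_le S hC x (Bf x)) (norm_nonneg L))
      have h5 : ‖Bf x‖ * ‖Bf x‖ ≤ (‖L‖ * C * C * ‖x‖) * ‖Bf x‖ := by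
        nlinarith [h1, h2, h3, h4]
      exact le_of_mul_le_mul_right h5 h0
  let B : H →L[ℂ] H := LinearMap.mkContinuous
    { toFun := Bf
      map_add' := hBf_add
      map_smul' := fun c x => hBf_smul c x }
    (‖L‖ * C * C) hBf_bound
  have hB : ∀ x y, ⟪B x, y⟫ = L (seqBCF S hC x y) := hBf
  have hreal : ∀ x, 0 ≤ (⟪B x, x⟫).re ∧ (⟪B x, x⟫).im = 0 := by
    intro x
    rw [hB]
    apply hL.pos
    intro n
    simp only [seqBCF_apply]
    constructor
    · rw [inner_self_re']; positivity
    · exact inner_self_im' _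
  refine ⟨B, ⟨⟨?_, ?_⟩, ?_⟩⟩
  · rw [LinearMap.isSymmetric_iff_inner_map_self_real]
    intro v
    have := (hreal v).2
    rw [Complex.conj_eq_iff_im]
    exact this
  · intro x
    rw [ContinuousLinearMap.reApplyInnerSelf_apply, RCLike.re_to_complex]
    exact (hreal x).1
  · intro x y f hf
    have : f = seqBCF S hC x y := BoundedContinuousFunction.ext fun n => by
      rw [hf n, seqBCF_apply, ContinuousLinearMap.comp_apply,
        ContinuousLinearMap.adjoint_inner_left]
    rw [this]
    exact hB x y

/-- Move a self-adjoint operator across the inner product. -/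
lemma selfadj_move {B : H →L[ℂ] H} (hB : IsSelfAdjoint B) (u v : H) :
    ⟪B u, v⟫ = ⟪u, B v⟫ := by
  conv_rhs => rw [← hB.adjoint_eq]
  rw [ContinuousLinearMap.adjoint_inner_right]

/-- Cauchy–Schwarz for the semidefinite form of a positive operator. -/
lemma pos_cs {B : H →L[ℂ] H} (hB : B.IsPositive) (x y : H) :
    ‖⟪B x, y⟫‖ * ‖⟪B y, x⟫‖ ≤ (⟪B x, x⟫).re * (⟪B y, y⟫).re := by
  let core : PreInnerProductSpace.Core ℂ H :=
    { inner := fun u v => ⟪B u, v⟫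
      conj_inner_symm := fun u v => by
        show (starRingEnd ℂ) ⟪B v, u⟫ = ⟪B u, v⟫
        rw [inner_conj_symm]
        exact (selfadj_move hB.isSelfAdjoint u v).symm
      re_inner_nonneg := fun u => hB.2 u
      add_left := fun u v w => by
        show ⟪B (u + v), w⟫ = ⟪B u, w⟫ + ⟪B v, w⟫
        rw [map_add, inner_add_left]
      smul_left := fun u v c => by
        show ⟪B (c • u), v⟫ = (starRingEnd ℂ) c * ⟪B u, v⟫
        rw [map_smul, inner_smul_left] }
  have h := @InnerProductSpace.Core.inner_mul_inner_self_le ℂ H _ _ _ core x y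
  exact h

/-- A positive operator with zero diagonal value kills the vector. -/
lemma pos_eq_zero {B : H →L[ℂ] H} (hB : B.IsPositive) {z : H}
    (hz : (⟪B z, z⟫).re ≤ 0) : B z = 0 := by
  have h := pos_cs hB z (B z)
  have hadj : ⟪B (B z), z⟫ = ⟪B z, B z⟫ := selfadj_move hB.isSelfAdjoint (B z) z
  rw [hadj, inner_self_norm'] at h
  have h3 : 0 ≤ (⟪B z, z⟫).re := hB.2 z
  have h4 : (⟪B z, z⟫).re = 0 := le_antisymm hz h3
  rw [h4, zero_mul] at h
  have h6 : ‖B z‖ ^ 2 * ‖B z‖ ^ 2 = 0 := le_antisymm h (by positivity)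
  have h7 : ‖B z‖ ^ 2 = 0 := by
    rcases mul_eq_zero.1 h6 with h' | h' <;> exact h'
  exact norm_eq_zero.1 (pow_eq_zero_iff two_ne_zero |>.1 h7)

/-- For a positive operator, `‖Av‖² ≤ (‖A‖+1)·re⟪Av,v⟫`. -/
lemma norm_sq_le_form {A : H →L[ℂ] H} (hA : A.IsPositive) (v : H) :
    ‖A v‖ ^ 2 ≤ (‖A‖ + 1) * (⟪A v, v⟫).re := by
  have hnn : 0 ≤ (⟪A v, v⟫).re := hA.2 v
  rcases eq_or_ne (A v) 0 with h0 | h0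
  · have h1 : (⟪A v, v⟫).re = 0 := by rw [h0]; simp
    rw [h1, mul_zero, h0, norm_zero]
    norm_num
  · have h := pos_cs hA v (A v)
    have hadj : ⟪A (A v), v⟫ = ⟪A v, A v⟫ := selfadj_move hA.isSelfAdjoint (A v) v
    rw [hadj, inner_self_norm'] at h
    have h3 : (⟪A (A v), A v⟫).re ≤ ‖A‖ * ‖A v‖ ^ 2 := by
      calc (⟪A (A v), A v⟫).re ≤ ‖⟪A (A v), A v⟫‖ := Complex.re_le_norm _
        _ ≤ ‖A (A v)‖ * ‖A v‖ := norm_inner_le_norm _ _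
        _ ≤ (‖A‖ * ‖A v‖) * ‖A v‖ :=
            mul_le_mul_of_nonneg_right (A.le_opNorm (A v)) (norm_nonneg _)
        _ = ‖A‖ * ‖A v‖ ^ 2 := by ring
    have hm : 0 < ‖A v‖ := norm_pos_iff.2 h0
    have hm2 : 0 < ‖A v‖ ^ 2 := by positivity
    have h4 : ‖A v‖ ^ 2 * ‖A v‖ ^ 2 ≤ (⟪A v, v⟫).re * (‖A‖ * ‖A v‖ ^ 2) :=
      le_trans h (mul_le_mul_of_nonneg_left h3 hnn)
    have h5 : ‖A v‖ ^ 2 ≤ (⟪A v, v⟫).re * ‖A‖ :=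
      le_of_mul_le_mul_right (by nlinarith [h4]) hm2
    nlinarith [h5, hnn]

/-- Comparison of asymptotic forms under a pointwise norm domination. -/
lemma form_le {L : (ℕ →ᵇ ℂ) →L[ℂ] ℂ} (hL : IsBanachLimit L)
    (T S : H →L[ℂ] H) {CT CS : ℝ} (hCT : ∀ n : ℕ, ‖T ^ n‖ ≤ CT) (hCS : ∀ n : ℕ, ‖S ^ n‖ ≤ CS)
    (r : ℝ) (hr : 0 ≤ r) (z w : H) (hpt : ∀ n : ℕ, ‖(T ^ n) z‖ ≤ r * ‖(S ^ n) w‖) :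
    (L (seqBCF T hCT z z)).re ≤ r ^ 2 * (L (seqBCF S hCS w w)).re := by
  have hmono : (L (seqBCF T hCT z z)).re ≤ (L (((r ^ 2 : ℝ) : ℂ) • seqBCF S hCS w w)).re := by
    apply re_L_mono hL
    intro n
    refine ⟨inner_self_im' _, ?_, ?_⟩
    · simp only [BoundedContinuousFunction.coe_smul, Pi.smul_apply, seqBCF_apply, smul_eq_mul,
        Complex.mul_im, Complex.ofReal_re, Complex.ofReal_im, inner_self_im', zero_mul, mul_zero,
        add_zero]
    · simp only [BoundedContinuousFunction.coe_smul, Pi.smul_apply, seqBCF_apply, smul_eq_mul,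
        Complex.mul_re, Complex.ofReal_re, Complex.ofReal_im, inner_self_re', inner_self_im',
        zero_mul, mul_zero, sub_zero]
      calc ‖(T ^ n) z‖ ^ 2 ≤ (r * ‖(S ^ n) w‖) ^ 2 :=
            pow_le_pow_left₀ (norm_nonneg _) (hpt n) 2
        _ = r ^ 2 * ‖(S ^ n) w‖ ^ 2 := by ring
  have hsmul : L (((r ^ 2 : ℝ) : ℂ) • seqBCF S hCS w w)
      = ((r ^ 2 : ℝ) : ℂ) * L (seqBCF S hCS w w) := by rw [map_smul, smul_eq_mul]
  rw [hsmul, Complex.mul_re, Complex.ofReal_re, Complex.ofReal_im, zero_mul, sub_zero] at hmono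
  exact hmono

/-- Transfer of the reduced-minimum-modulus positivity along a similarity. -/
lemma transfer [Nontrivial H] {T S X X' : H →L[ℂ] H}
    (hX : X ∘L X' = 1) (hX' : X' ∘L X = 1) (hsim : S = X ∘L T ∘L X')
    {CT CS : ℝ} (hCT : ∀ n : ℕ, ‖T ^ n‖ ≤ CT) (hCS : ∀ n : ℕ, ‖S ^ n‖ ≤ CS)
    {L : (ℕ →ᵇ ℂ) →L[ℂ] ℂ} (hL : IsBanachLimit L) {A B : H →L[ℂ] H}
    (hA : IsLAsymptoticLimit L T A) (hB : IsLAsymptoticLimit L S B)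
    {c : ℝ} (hc : 0 < c) (hbd : ∀ x ∈ (LinearMap.ker (A : H →ₗ[ℂ] H))ᗮ, c * ‖x‖ ≤ ‖A x‖) :
    ∃ c' : ℝ, 0 < c' ∧ ∀ x ∈ (LinearMap.ker (B : H →ₗ[ℂ] H))ᗮ, c' * ‖x‖ ≤ ‖B x‖ := by
  have hXX' : ∀ y : H, X (X' y) = y := fun y => by
    have h := ContinuousLinearMap.ext_iff.1 hX y
    simpa using h
  have hX'X : ∀ y : H, X' (X y) = y := fun y => by
    have h := ContinuousLinearMap.ext_iff.1 hX' y
    simpa using h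
  have hpow : ∀ (n : ℕ) (y : H), (S ^ n) y = X ((T ^ n) (X' y)) := by
    intro n
    induction n with
    | zero => intro y; simpa using (hXX' y).symm
    | succ n ih =>
      intro y
      have h1 : (S ^ (n + 1)) y = (S ^ n) (S y) := by rw [pow_succ]; rfl
      have h2 : X' (S y) = T (X' y) := by
        rw [hsim]
        simp only [ContinuousLinearMap.comp_apply]
        rw [hX'X]
      have h3 : (T ^ (n + 1)) (X' y) = (T ^ n) (T (X' y)) := by rw [pow_succ]; rfl
      rw [h1, ih (S y), h2, h3]
  have hTX' : ∀ (n : ℕ) (x : H), (T ^ n) (X' x) = X' ((S ^ n) x) := fun n x => by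
    rw [hpow n x, hX'X]
  have hSX : ∀ (n : ℕ) (u : H), (S ^ n) (X u) = X ((T ^ n) u) := fun n u => by
    rw [hpow n (X u), hX'X]
  have hAf : ∀ x y : H, ⟪A x, y⟫ = L (seqBCF T hCT x y) := fun x y => inner_eq hA hCT x y
  have hBf : ∀ x y : H, ⟪B x, y⟫ = L (seqBCF S hCS x y) := fun x y => inner_eq hB hCS x y
  -- positivity of the similarity norms
  have hX1 : (1 : ℝ) ≤ ‖X‖ * ‖X'‖ := by
    have h1 : ‖X ∘L X'‖ ≤ ‖X‖ * ‖X'‖ := ContinuousLinearMap.opNorm_comp_le X X'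
    rw [hX] at h1
    have h2 : ‖(1 : H →L[ℂ] H)‖ = 1 := by
      rw [ContinuousLinearMap.one_def, ContinuousLinearMap.norm_id]
    linarith
  have hXpos : 0 < ‖X‖ := by
    rcases lt_or_ge 0 ‖X‖ with h | h
    · exact h
    · exfalso
      have : ‖X‖ = 0 := le_antisymm h (norm_nonneg X)
      rw [this, zero_mul] at hX1
      linarith
  have hX'pos : 0 < ‖X'‖ := by
    rcases lt_or_ge 0 ‖X'‖ with h | h
    · exact h
    · exfalso
      have : ‖X'‖ = 0 := le_antisymm h (norm_nonneg X')
      rw [this, mul_zero] at hX1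
      linarith
  -- the two comparison inequalities
  have compI : ∀ x : H, (⟪A (X' x), X' x⟫).re ≤ ‖X'‖ ^ 2 * (⟪B x, x⟫).re := by
    intro x
    have h := form_le hL T S hCT hCS ‖X'‖ (norm_nonneg X') (X' x) x
      (fun n => by rw [hTX' n x]; exact X'.le_opNorm _)
    rwa [← hAf (X' x) (X' x), ← hBf x x] at h
  have compII : ∀ u : H, (⟪B (X u), X u⟫).re ≤ ‖X‖ ^ 2 * (⟪A u, u⟫).re := by
    intro u
    have h := form_le hL S T hCS hCT ‖X‖ (norm_nonneg X) (X u) u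
      (fun n => by rw [hSX n u]; exact X.le_opNorm _)
    rwa [← hBf (X u) (X u), ← hAf u u] at h
  refine ⟨c ^ 2 / ((‖A‖ + 1) * ‖X‖ ^ 2 * ‖X'‖ ^ 2), by positivity, ?_⟩
  intro x hx
  rcases eq_or_ne x 0 with rfl | hx0
  · simp
  have hxpos : 0 < ‖x‖ := norm_pos_iff.2 hx0
  haveI : CompleteSpace (LinearMap.ker (A : H →ₗ[ℂ] H)) :=
    (ContinuousLinearMap.isClosed_ker A).completeSpace_coe
  obtain ⟨u, hu, v, hv, huv⟩ :=
    Submodule.exists_add_mem_mem_orthogonal (K := LinearMap.ker (A : H →ₗ[ℂ] H)) (X' x)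
  have hAu : A u = 0 := LinearMap.mem_ker.1 hu
  -- X u is killed by B
  have hBXu : B (X u) = 0 := by
    apply pos_eq_zero hB.1
    have h2 := compII u
    have h3 : (⟪A u, u⟫).re = 0 := by rw [hAu]; simp
    rw [h3, mul_zero] at h2
    exact h2
  -- ‖x‖ is controlled by ‖v‖
  have hxv : ‖x‖ ≤ ‖X‖ * ‖v‖ := by
    have hxd : x = X u + X v := by rw [← map_add, ← huv, hXX' x]
    have horth : ⟪X u, x⟫ = 0 :=
      (Submodule.mem_orthogonal _ x).1 hx (X u) (LinearMap.mem_ker.2 hBXu)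
    have h1 : (‖x‖ : ℝ) ^ 2 = (⟪x, x⟫).re := (inner_self_re' x).symm
    have h2 : ⟪x, x⟫ = ⟪X v, x⟫ := by
      have h2' := congrArg (fun z : H => ⟪z, x⟫) hxd
      rw [h2', inner_add_left, horth, zero_add]
    have h3 : (⟪X v, x⟫).re ≤ ‖X‖ * ‖v‖ * ‖x‖ :=
      calc (⟪X v, x⟫).re ≤ ‖⟪X v, x⟫‖ := Complex.re_le_norm _
        _ ≤ ‖X v‖ * ‖x‖ := norm_inner_le_norm _ _
        _ ≤ ‖X‖ * ‖v‖ * ‖x‖ := mul_le_mul_of_nonneg_right (X.le_opNorm v) (norm_nonneg _)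
    have h4 : ‖x‖ * ‖x‖ ≤ (‖X‖ * ‖v‖) * ‖x‖ := by
      have := h1.symm ▸ (h2 ▸ h3 : (⟪x, x⟫).re ≤ ‖X‖ * ‖v‖ * ‖x‖)
      nlinarith [this]
    exact le_of_mul_le_mul_right h4 hxpos
  -- the form of A at X' x is the form at v
  have hAX' : ⟪A (X' x), X' x⟫ = ⟪A v, v⟫ := by
    rw [huv, map_add, hAu, zero_add, inner_add_right,
      selfadj_move hA.1.isSelfAdjoint v u, hAu, inner_zero_right, zero_add]
  have hAv : c * ‖v‖ ≤ ‖A v‖ := hbd v hv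
  have hform : ‖A v‖ ^ 2 ≤ (‖A‖ + 1) * (⟪A v, v⟫).re := norm_sq_le_form hA.1 v
  have hBform : (⟪A v, v⟫).re ≤ ‖X'‖ ^ 2 * (⟪B x, x⟫).re := by
    have h := compI x
    rwa [hAX'] at h
  have hBxn : (⟪B x, x⟫).re ≤ ‖B x‖ * ‖x‖ :=
    calc (⟪B x, x⟫).re ≤ ‖⟪B x, x⟫‖ := Complex.re_le_norm _
      _ ≤ ‖B x‖ * ‖x‖ := norm_inner_le_norm _ _
  -- arithmetic
  have e1 : (c * ‖v‖) ^ 2 ≤ ‖A v‖ ^ 2 := pow_le_pow_left₀ (by positivity) hAv 2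
  have e2 : ‖A v‖ ^ 2 ≤ (‖A‖ + 1) * (‖X'‖ ^ 2 * (‖B x‖ * ‖x‖)) := by
    refine le_trans hform (mul_le_mul_of_nonneg_left ?_ (by positivity))
    refine le_trans hBform (mul_le_mul_of_nonneg_left hBxn (by positivity))
  have e3 : ‖x‖ ^ 2 ≤ ‖X‖ ^ 2 * ‖v‖ ^ 2 := by
    have := pow_le_pow_left₀ (norm_nonneg x) hxv 2
    calc ‖x‖ ^ 2 ≤ (‖X‖ * ‖v‖) ^ 2 := this
      _ = ‖X‖ ^ 2 * ‖v‖ ^ 2 := by ring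
  have s1 : c ^ 2 * ‖x‖ ^ 2 ≤ c ^ 2 * (‖X‖ ^ 2 * ‖v‖ ^ 2) :=
    mul_le_mul_of_nonneg_left e3 (by positivity)
  have s2 : ‖X‖ ^ 2 * (c * ‖v‖) ^ 2 ≤ ‖X‖ ^ 2 * ‖A v‖ ^ 2 :=
    mul_le_mul_of_nonneg_left e1 (by positivity)
  have s3 : ‖X‖ ^ 2 * ‖A v‖ ^ 2
      ≤ ‖X‖ ^ 2 * ((‖A‖ + 1) * (‖X'‖ ^ 2 * (‖B x‖ * ‖x‖))) :=
    mul_le_mul_of_nonneg_left e2 (by positivity)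
  have s4 : c ^ 2 * (‖X‖ ^ 2 * ‖v‖ ^ 2) = ‖X‖ ^ 2 * (c * ‖v‖) ^ 2 := by ring
  have key : c ^ 2 * ‖x‖ ^ 2
      ≤ ((‖A‖ + 1) * ‖X‖ ^ 2 * ‖X'‖ ^ 2) * (‖B x‖ * ‖x‖) := by nlinarith [s1, s2, s3, s4]
  rw [div_mul_eq_mul_div, div_le_iff₀ (by positivity)]
  refine le_of_mul_le_mul_right ?_ hxpos
  nlinarith [key]

end

end Stmt14Aux

/-- If `T` and `S` are power bounded, neither of class `C₀·`, and similar to each other,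
then `γ(A_{T,L}) > 0` for some Banach limit `L` if and only if `γ(A_{S,L}) > 0` for some
Banach limit `L`.  (Here `γ(A) > 0` is expressed as: `A` is bounded below on `(ker A)ᗮ`.) -/
theorem stmt14 {H : Type*} [NormedAddCommGroup H] [InnerProductSpace ℂ H] [CompleteSpace H]
    (T S : H →L[ℂ] H)
    (hT : ∃ C : ℝ, ∀ n : ℕ, ‖T ^ n‖ ≤ C) (hS : ∃ C : ℝ, ∀ n : ℕ, ‖S ^ n‖ ≤ C)
    (hT0 : ∃ x : H, ¬ Tendsto (fun n : ℕ => ‖(T ^ n) x‖) atTop (𝓝 0))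
    (hS0 : ∃ x : H, ¬ Tendsto (fun n : ℕ => ‖(S ^ n) x‖) atTop (𝓝 0))
    (X X' : H →L[ℂ] H) (hX : X ∘L X' = 1) (hX' : X' ∘L X = 1)
    (hsim : S = X ∘L T ∘L X') :
    (∃ (L : (ℕ →ᵇ ℂ) →L[ℂ] ℂ) (A : H →L[ℂ] H), IsBanachLimit L ∧
        IsLAsymptoticLimit L T A ∧
        ∃ c : ℝ, 0 < c ∧ ∀ x ∈ (LinearMap.ker (A : H →ₗ[ℂ] H))ᗮ, c * ‖x‖ ≤ ‖A x‖) ↔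
    (∃ (L : (ℕ →ᵇ ℂ) →L[ℂ] ℂ) (B : H →L[ℂ] H), IsBanachLimit L ∧
        IsLAsymptoticLimit L S B ∧
        ∃ c : ℝ, 0 < c ∧ ∀ x ∈ (LinearMap.ker (B : H →ₗ[ℂ] H))ᗮ, c * ‖x‖ ≤ ‖B x‖) := by
  obtain ⟨CT, hCT⟩ := hT
  obtain ⟨CS, hCS⟩ := hS
  haveI hnt : Nontrivial H := by
    obtain ⟨x, hx⟩ := hT0
    refine ⟨x, 0, fun h => hx ?_⟩
    have : (fun n : ℕ => ‖(T ^ n) x‖) = fun _ => (0 : ℝ) := by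
      funext n; rw [h]; simp
    rw [this]
    exact tendsto_const_nhds
  have hX'X : ∀ y : H, X' (X y) = y := fun y => by
    have h := ContinuousLinearMap.ext_iff.1 hX' y
    simpa using h
  have hsim' : T = X' ∘L S ∘L X := by
    ext x
    rw [hsim]
    simp only [ContinuousLinearMap.comp_apply]
    rw [hX'X, hX'X]
  constructor
  · rintro ⟨L, A, hL, hA, c, hc, hbd⟩
    obtain ⟨B, hB⟩ := Stmt14Aux.exists_asymptotic_limit L hL S hCS
    obtain ⟨c', hc', hbd'⟩ := Stmt14Aux.transfer hX hX' hsim hCT hCS hL hA hB hc hbd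
    exact ⟨L, B, hL, hB, c', hc', hbd'⟩
  · rintro ⟨L, B, hL, hB, c, hc, hbd⟩
    obtain ⟨A, hA⟩ := Stmt14Aux.exists_asymptotic_limit L hL T hCT
    obtain ⟨c', hc', hbd'⟩ := Stmt14Aux.transfer hX' hX hsim' hCS hCT hL hB hA hc hbd
    exact ⟨L, A, hL, hA, c', hc', hbd'⟩
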